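/- Double robustness with correct propensity score: for every measurable D:𝒳→[0,1] and every pair of working outcome models m₁,m₀:𝒳→ℝ with m₁(X),m₀(X)∈L², E[ψ(D, π₁, (m₁,m₀))] = V(D); that is, the AIPW score evaluated with the true propensity score π₁ is unbiased for the value V(D) regardless of the outcome working models. -/

import Mathlib

open MeasureTheory ProbabilityTheory Filter Topology
open scoped Classical

/-- AIPW score `ψ(D, p, (m₁, m₀))` evaluated at a sample point `ω`. -/
noncomputable def aipw {Ω 𝒳 : Type*} (X : Ω → 𝒳) (A Y : Ω → ℝ)
    (D p m₁ m₀ : 𝒳 → ℝ) (ω : Ω) : ℝ :=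
  (A ω * D (X ω) + (1 - A ω) * (1 - D (X ω))) /
      (A ω * p (X ω) + (1 - A ω) * (1 - p (X ω))) *
    (Y ω - (A ω * m₁ (X ω) + (1 - A ω) * m₀ (X ω)))
  + D (X ω) * m₁ (X ω) + (1 - D (X ω)) * m₀ (X ω)

lemma key_int {Ω 𝒳 : Type*} [MeasurableSpace Ω] [MeasurableSpace 𝒳]
    (P : Measure Ω) [IsProbabilityMeasure P] (X : Ω → 𝒳) (hX : Measurable X)
    (f : 𝒳 → ℝ) (hf : Measurable f) (C : ℝ) (hfb : ∀ x, ‖f x‖ ≤ C)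
    (Z : Ω → ℝ) (hZ : Integrable Z P)
    (g : 𝒳 → ℝ)
    (hcond : P[Z | MeasurableSpace.comap X inferInstance] =ᵐ[P] fun ω => g (X ω)) :
    ∫ ω, f (X ω) * Z ω ∂P = ∫ ω, f (X ω) * g (X ω) ∂P := by
  set m := MeasurableSpace.comap X inferInstance with hmdef
  have hm : m ≤ _ := hX.comap_le
  haveI : SigmaFinite (P.trim hm) := by
    have : IsFiniteMeasure (P.trim hm) := isFiniteMeasure_trim hm
    infer_instance
  have hXm : Measurable[m] X := Measurable.of_comap_le le_rfl
  have hfm : StronglyMeasurable[m] (fun ω => f (X ω)) := (hf.comp hXm).stronglyMeasurable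
  have hprod : Integrable (fun ω => f (X ω) * Z ω) P :=
    hZ.bdd_mul (hf.comp hX).aestronglyMeasurable (ae_of_all _ fun ω => hfb _)
  have h1 : P[(fun ω => f (X ω)) * Z | m] =ᵐ[P] (fun ω => f (X ω)) * P[Z | m] :=
    condExp_mul_of_stronglyMeasurable_left hfm hprod hZ
  calc ∫ ω, f (X ω) * Z ω ∂P
      = ∫ ω, (P[(fun ω => f (X ω)) * Z | m]) ω ∂P := (integral_condExp hm).symm
    _ = ∫ ω, f (X ω) * (P[Z | m]) ω ∂P := integral_congr_ae h1
    _ = ∫ ω, f (X ω) * g (X ω) ∂P := by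
        refine integral_congr_ae (hcond.mono fun ω h => ?_)
        dsimp at h ⊢; rw [h]

theorem stmt_7 {Ω 𝒳 : Type*} [MeasurableSpace Ω] [MeasurableSpace 𝒳]
    (P : Measure Ω) [IsProbabilityMeasure P]
    (X : Ω → 𝒳) (A Y : Ω → ℝ)
    (hX : Measurable X) (hA : Measurable A) (hY : Measurable Y)
    (hAbin : ∀ ω, A ω = 0 ∨ A ω = 1) (hYL2 : MemLp Y 2 P)
    (c : ℝ) (hc : c ∈ Set.Ioo (0 : ℝ) (1 / 2))
    (π₁ : 𝒳 → ℝ) (hπ₁m : Measurable π₁) (hπ₁r : ∀ x, π₁ x ∈ Set.Icc c (1 - c))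
    (hcondA : P[A | MeasurableSpace.comap X inferInstance]
      =ᵐ[P] fun ω => π₁ (X ω))
    (μ₁ μ₀ : 𝒳 → ℝ) (hμ₁m : Measurable μ₁) (hμ₀m : Measurable μ₀)
    (hμ₁L2 : MemLp (fun ω => μ₁ (X ω)) 2 P) (hμ₀L2 : MemLp (fun ω => μ₀ (X ω)) 2 P)
    (hcond1 : P[fun ω => A ω * Y ω | MeasurableSpace.comap X inferInstance]
      =ᵐ[P] fun ω => μ₁ (X ω) * π₁ (X ω))
    (hcond0 : P[fun ω => (1 - A ω) * Y ω | MeasurableSpace.comap X inferInstance]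
      =ᵐ[P] fun ω => μ₀ (X ω) * (1 - π₁ (X ω))) :
    ∀ D : 𝒳 → ℝ, Measurable D → (∀ x, D x ∈ Set.Icc (0 : ℝ) 1) →
    ∀ m₁ m₀ : 𝒳 → ℝ, Measurable m₁ → Measurable m₀ →
      MemLp (fun ω => m₁ (X ω)) 2 P → MemLp (fun ω => m₀ (X ω)) 2 P →
      ∫ ω, aipw X A Y D π₁ m₁ m₀ ω ∂P
        = ∫ ω, (D (X ω) * μ₁ (X ω) + (1 - D (X ω)) * μ₀ (X ω)) ∂P := by
  intro D hD hDr m₁ m₀ hm₁ hm₀ hm₁L2 hm₀L2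
  have hm : MeasurableSpace.comap X inferInstance ≤ _ := hX.comap_le
  haveI : SigmaFinite (P.trim hm) := by
    have : IsFiniteMeasure (P.trim hm) := isFiniteMeasure_trim hm
    infer_instance
  have hXm : Measurable[MeasurableSpace.comap X inferInstance] X :=
    Measurable.of_comap_le le_rfl
  -- basic bounds
  have hc0 : (0:ℝ) < c := hc.1
  have hπpos : ∀ x, 0 < π₁ x := fun x => lt_of_lt_of_le hc0 (hπ₁r x).1
  have hπlt : ∀ x, 0 < 1 - π₁ x := fun x => by
    have := (hπ₁r x).2; linarith
  have hAbd : ∀ ω, ‖A ω‖ ≤ 1 := fun ω => by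
    rcases hAbin ω with h | h <;> simp [h]
  have h1Abd : ∀ ω, ‖1 - A ω‖ ≤ 1 := fun ω => by
    rcases hAbin ω with h | h <;> simp [h]
  -- bounded weight functions
  set f1 : 𝒳 → ℝ := fun x => D x / π₁ x with hf1def
  set f2 : 𝒳 → ℝ := fun x => (1 - D x) / (1 - π₁ x) with hf2def
  have hf1m : Measurable f1 := hD.div hπ₁m
  have hf2m : Measurable f2 := (measurable_const.sub hD).div (measurable_const.sub hπ₁m)
  have hf1b : ∀ x, ‖f1 x‖ ≤ 1 / c := fun x => by
    rw [Real.norm_eq_abs, abs_of_nonneg (div_nonneg (hDr x).1 (hπpos x).le)]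
    exact div_le_div₀ zero_le_one (hDr x).2 hc0 (hπ₁r x).1
  have hf2b : ∀ x, ‖f2 x‖ ≤ 1 / c := fun x => by
    have h1 : 0 ≤ 1 - D x := by have := (hDr x).2; linarith
    have h2 : 1 - D x ≤ 1 := by have := (hDr x).1; linarith
    have h3 : c ≤ 1 - π₁ x := by have := (hπ₁r x).2; linarith
    rw [Real.norm_eq_abs, abs_of_nonneg (div_nonneg h1 (hπlt x).le)]
    exact div_le_div₀ zero_le_one h2 hc0 h3
  -- integrabilities
  have hYint : Integrable Y P := hYL2.integrable one_le_two
  have hμ₁X : Integrable (fun ω => μ₁ (X ω)) P := hμ₁L2.integrable one_le_two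
  have hμ₀X : Integrable (fun ω => μ₀ (X ω)) P := hμ₀L2.integrable one_le_two
  have hm₁X : Integrable (fun ω => m₁ (X ω)) P := hm₁L2.integrable one_le_two
  have hm₀X : Integrable (fun ω => m₀ (X ω)) P := hm₀L2.integrable one_le_two
  have hAint : Integrable A P :=
    (integrable_const (1:ℝ)).mono' hA.aestronglyMeasurable (ae_of_all _ hAbd)
  have hAY : Integrable (fun ω => A ω * Y ω) P :=
    hYint.bdd_mul hA.aestronglyMeasurable (ae_of_all _ hAbd)
  have h1AY : Integrable (fun ω => (1 - A ω) * Y ω) P :=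
    hYint.bdd_mul (measurable_const.sub hA).aestronglyMeasurable (ae_of_all _ h1Abd)
  have hAm₁ : Integrable (fun ω => A ω * m₁ (X ω)) P :=
    hm₁X.bdd_mul hA.aestronglyMeasurable (ae_of_all _ hAbd)
  have h1Am₀ : Integrable (fun ω => (1 - A ω) * m₀ (X ω)) P :=
    hm₀X.bdd_mul (measurable_const.sub hA).aestronglyMeasurable (ae_of_all _ h1Abd)
  -- pull-out conditional expectations
  have hm₁Sm : StronglyMeasurable[MeasurableSpace.comap X inferInstance] (fun ω => m₁ (X ω)) := (hm₁.comp hXm).stronglyMeasurable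
  have hm₀Sm : StronglyMeasurable[MeasurableSpace.comap X inferInstance] (fun ω => m₀ (X ω)) := (hm₀.comp hXm).stronglyMeasurable
  have hc1 : P[fun ω => A ω * m₁ (X ω) | MeasurableSpace.comap X inferInstance] =ᵐ[P] fun ω => m₁ (X ω) * π₁ (X ω) := by
    have heq : (fun ω => A ω * m₁ (X ω)) = (fun ω => m₁ (X ω)) * A :=
      funext fun ω => mul_comm _ _
    rw [heq]
    have h := condExp_mul_of_stronglyMeasurable_left (μ := P) hm₁Sm
      (by rw [← heq]; exact hAm₁) hAint
    refine h.trans ?_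
    filter_upwards [hcondA] with ω hω
    simp only [Pi.mul_apply, hω]
  have hc1mA : P[fun ω => 1 - A ω | MeasurableSpace.comap X inferInstance] =ᵐ[P] fun ω => 1 - π₁ (X ω) := by
    have e : (fun ω => 1 - A ω) = ((fun _ => (1:ℝ)) - A) := rfl
    rw [e]
    have h := condExp_sub (μ := P) (m := MeasurableSpace.comap X inferInstance) (integrable_const (1:ℝ)) hAint
    rw [condExp_const hm] at h
    refine h.trans ?_
    filter_upwards [hcondA] with ω hω
    simp only [Pi.sub_apply, hω]
  have h1Aint : Integrable (fun ω => 1 - A ω) P := (integrable_const (1:ℝ)).sub hAint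
  have hc0' : P[fun ω => (1 - A ω) * m₀ (X ω) | MeasurableSpace.comap X inferInstance]
      =ᵐ[P] fun ω => m₀ (X ω) * (1 - π₁ (X ω)) := by
    have heq : (fun ω => (1 - A ω) * m₀ (X ω)) = (fun ω => m₀ (X ω)) * (fun ω => 1 - A ω) :=
      funext fun ω => mul_comm _ _
    rw [heq]
    have h := condExp_mul_of_stronglyMeasurable_left (μ := P) hm₀Sm
      (by rw [← heq]; exact h1Am₀) h1Aint
    refine h.trans ?_
    filter_upwards [hc1mA] with ω hω
    simp only [Pi.mul_apply, hω]
  -- the four key integral identities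
  have hI1 : ∫ ω, f1 (X ω) * (A ω * Y ω) ∂P = ∫ ω, D (X ω) * μ₁ (X ω) ∂P := by
    rw [key_int P X hX f1 hf1m (1/c) hf1b _ hAY (fun x => μ₁ x * π₁ x) hcond1]
    refine integral_congr_ae (ae_of_all _ fun ω => ?_)
    have hne := (hπpos (X ω)).ne'
    simp only [hf1def]; field_simp
  have hI2 : ∫ ω, f1 (X ω) * (A ω * m₁ (X ω)) ∂P = ∫ ω, D (X ω) * m₁ (X ω) ∂P := by
    rw [key_int P X hX f1 hf1m (1/c) hf1b _ hAm₁ (fun x => m₁ x * π₁ x) hc1]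
    refine integral_congr_ae (ae_of_all _ fun ω => ?_)
    have hne := (hπpos (X ω)).ne'
    simp only [hf1def]; field_simp
  have hI3 : ∫ ω, f2 (X ω) * ((1 - A ω) * Y ω) ∂P
      = ∫ ω, (1 - D (X ω)) * μ₀ (X ω) ∂P := by
    rw [key_int P X hX f2 hf2m (1/c) hf2b _ h1AY (fun x => μ₀ x * (1 - π₁ x)) hcond0]
    refine integral_congr_ae (ae_of_all _ fun ω => ?_)
    have hne := (hπlt (X ω)).ne'
    simp only [hf2def]; field_simp
  have hI4 : ∫ ω, f2 (X ω) * ((1 - A ω) * m₀ (X ω)) ∂P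
      = ∫ ω, (1 - D (X ω)) * m₀ (X ω) ∂P := by
    rw [key_int P X hX f2 hf2m (1/c) hf2b _ h1Am₀ (fun x => m₀ x * (1 - π₁ x)) hc0']
    refine integral_congr_ae (ae_of_all _ fun ω => ?_)
    have hne := (hπlt (X ω)).ne'
    simp only [hf2def]; field_simp
  -- integrability of the pieces
  have hDbd : ∀ x, ‖D x‖ ≤ 1 := fun x => by
    rw [Real.norm_eq_abs, abs_of_nonneg (hDr x).1]; exact (hDr x).2
  have h1Dbd : ∀ x, ‖1 - D x‖ ≤ 1 := fun x => by
    rw [Real.norm_eq_abs, abs_of_nonneg (by have := (hDr x).2; linarith)]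
    have := (hDr x).1; linarith
  have hF1 : Integrable (fun ω => f1 (X ω) * (A ω * Y ω)) P :=
    hAY.bdd_mul (hf1m.comp hX).aestronglyMeasurable (ae_of_all _ fun ω => hf1b _)
  have hF2 : Integrable (fun ω => f1 (X ω) * (A ω * m₁ (X ω))) P :=
    hAm₁.bdd_mul (hf1m.comp hX).aestronglyMeasurable (ae_of_all _ fun ω => hf1b _)
  have hF3 : Integrable (fun ω => f2 (X ω) * ((1 - A ω) * Y ω)) P :=
    h1AY.bdd_mul (hf2m.comp hX).aestronglyMeasurable (ae_of_all _ fun ω => hf2b _)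
  have hF4 : Integrable (fun ω => f2 (X ω) * ((1 - A ω) * m₀ (X ω))) P :=
    h1Am₀.bdd_mul (hf2m.comp hX).aestronglyMeasurable (ae_of_all _ fun ω => hf2b _)
  have hF5 : Integrable (fun ω => D (X ω) * m₁ (X ω)) P :=
    hm₁X.bdd_mul (hD.comp hX).aestronglyMeasurable (ae_of_all _ fun ω => hDbd _)
  have hF6 : Integrable (fun ω => (1 - D (X ω)) * m₀ (X ω)) P :=
    hm₀X.bdd_mul ((measurable_const.sub hD).comp hX).aestronglyMeasurable
      (ae_of_all _ fun ω => h1Dbd _)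
  have hDμ₁ : Integrable (fun ω => D (X ω) * μ₁ (X ω)) P :=
    hμ₁X.bdd_mul (hD.comp hX).aestronglyMeasurable (ae_of_all _ fun ω => hDbd _)
  have h1Dμ₀ : Integrable (fun ω => (1 - D (X ω)) * μ₀ (X ω)) P :=
    hμ₀X.bdd_mul ((measurable_const.sub hD).comp hX).aestronglyMeasurable
      (ae_of_all _ fun ω => h1Dbd _)
  -- pointwise decomposition of the AIPW score
  have hptw : ∀ ω, aipw X A Y D π₁ m₁ m₀ ω =
      f1 (X ω) * (A ω * Y ω) - f1 (X ω) * (A ω * m₁ (X ω))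
      + f2 (X ω) * ((1 - A ω) * Y ω) - f2 (X ω) * ((1 - A ω) * m₀ (X ω))
      + (D (X ω) * m₁ (X ω) + (1 - D (X ω)) * m₀ (X ω)) := by
    intro ω
    have h1 := (hπpos (X ω)).ne'
    have h2 := (hπlt (X ω)).ne'
    unfold aipw
    rcases hAbin ω with h | h <;> rw [h] <;> simp only [hf1def, hf2def, sub_self, sub_zero, one_mul, zero_mul, add_zero, zero_add, mul_one, mul_zero] <;> field_simp <;> ring
  rw [show (fun ω => aipw X A Y D π₁ m₁ m₀ ω) = fun ω =>
      f1 (X ω) * (A ω * Y ω) - f1 (X ω) * (A ω * m₁ (X ω))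
      + f2 (X ω) * ((1 - A ω) * Y ω) - f2 (X ω) * ((1 - A ω) * m₀ (X ω))
      + (D (X ω) * m₁ (X ω) + (1 - D (X ω)) * m₀ (X ω)) from funext hptw]
  have h12 : Integrable (fun ω => f1 (X ω) * (A ω * Y ω)
      - f1 (X ω) * (A ω * m₁ (X ω))) P := hF1.sub hF2
  have h123 : Integrable (fun ω => f1 (X ω) * (A ω * Y ω)
      - f1 (X ω) * (A ω * m₁ (X ω)) + f2 (X ω) * ((1 - A ω) * Y ω)) P := h12.add hF3
  have h1234 : Integrable (fun ω => f1 (X ω) * (A ω * Y ω)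
      - f1 (X ω) * (A ω * m₁ (X ω)) + f2 (X ω) * ((1 - A ω) * Y ω)
      - f2 (X ω) * ((1 - A ω) * m₀ (X ω))) P := h123.sub hF4
  have h56 : Integrable (fun ω => D (X ω) * m₁ (X ω)
      + (1 - D (X ω)) * m₀ (X ω)) P := hF5.add hF6
  rw [integral_add h1234 h56,
      integral_sub h123 hF4,
      integral_add h12 hF3,
      integral_sub hF1 hF2,
      integral_add hF5 hF6,
      hI1, hI2, hI3, hI4, integral_add hDμ₁ h1Dμ₀]
  ring
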